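/- Let H and G be finite simple graphs. Then |EdgInj(H,G)| = Σ_ρ |Emb(H/ρ, G)|, where the sum ranges over all edge-injective partitions ρ of V(H). More precisely, the edge-injective homomorphisms from H to G are in bijection with the pairs (ρ, g), where ρ is an edge-injective partition of V(H) and g is an embedding of the quotient graph H/ρ into G. -/

import Mathlib

open SimpleGraph

/-- A homomorphism `φ : H →g G` is *edge-injective* if distinct edges of `H`
are mapped to distinct edges of `G`. -/
def EdgeInjective {V W : Type*} {H : SimpleGraph V} {G : SimpleGraph W} (φ : H →g G) : Prop :=
  ∀ e ∈ H.edgeSet, ∀ f ∈ H.edgeSet, Sym2.map φ e = Sym2.map φ f → e = f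

/-- A partition (setoid) of the vertex set of `H` is *edge-injective* if every block is an
independent set of `H` and between any two distinct blocks there is at most one edge of `H`. -/
def EdgeInjectivePartition {V : Type*} (H : SimpleGraph V) (s : Setoid V) : Prop :=
  (∀ u v, s.r u v → ¬ H.Adj u v) ∧
  (∀ u v u' v', H.Adj u v → H.Adj u' v' → s.r u u' → s.r v v' → u = u' ∧ v = v')

/-- The quotient graph `H/ρ` of a partition `ρ` of the vertices of `H`: distinct blocks are
adjacent iff some edge of `H` joins them. -/
def quotientGraph {V : Type*} (H : SimpleGraph V) (s : Setoid V) : SimpleGraph (Quotient s) where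
  Adj A B := A ≠ B ∧ ∃ u v, Quotient.mk s u = A ∧ Quotient.mk s v = B ∧ H.Adj u v
  symm := by
    constructor
    rintro A B ⟨hne, u, w, hu, hw, h⟩
    exact ⟨hne.symm, w, u, hw, hu, h.symm⟩
  loopless := by
    constructor
    rintro A ⟨hne, -⟩
    exact hne rfl

section Main
variable {VH VG : Type*} {H : SimpleGraph VH} {G : SimpleGraph VG}

/-- forward: kernel setoid of φ -/
lemma ker_edgeInjPart (φ : H →g G) (hφ : EdgeInjective φ) :
    EdgeInjectivePartition H (Setoid.ker φ) := by
  constructor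
  · intro u v h hadj
    exact (G.loopless.irrefl _) (h ▸ φ.map_adj hadj)
  · intro u v u' v' huv hu'v' h1 h2
    have he : Sym2.map φ s(u, v) = Sym2.map φ s(u', v') := by
      simp only [Sym2.map_pair_eq]
      rw [h1, h2]
    have := hφ s(u,v) huv s(u',v') hu'v' he
    rw [Sym2.eq_iff] at this
    rcases this with ⟨rfl, rfl⟩ | ⟨rfl, rfl⟩
    · exact ⟨rfl, rfl⟩
    · exact absurd (h1 ▸ φ.map_adj huv) (G.loopless.irrefl _)

def descHom (φ : H →g G) : quotientGraph H (Setoid.ker φ) →g G where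
  toFun := Quotient.lift φ (fun _ _ h => h)
  map_rel' := by
    rintro A B ⟨hne, u, v, rfl, rfl, huv⟩
    exact φ.map_adj huv

lemma descHom_inj (φ : H →g G) : Function.Injective ⇑(descHom φ) := by
  rintro ⟨u⟩ ⟨v⟩ h
  exact Quotient.sound h

/-- inverse -/
def liftHom (s : Setoid VH) (hs : EdgeInjectivePartition H s)
    (g : quotientGraph H s →g G) : H →g G where
  toFun := fun v => g (Quotient.mk s v)
  map_rel' := by
    intro u v huv
    refine g.map_adj ⟨?_, u, v, rfl, rfl, huv⟩
    intro h
    exact hs.1 u v (Quotient.eq''.mp h) huv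

lemma liftHom_edgeInj (s : Setoid VH) (hs : EdgeInjectivePartition H s)
    (g : quotientGraph H s →g G) (hg : Function.Injective ⇑g) :
    EdgeInjective (liftHom s hs g) := by
  intro e he f hf h
  induction e with | _ u v => ?_
  induction f with | _ u' v' => ?_
  rw [mem_edgeSet] at he hf
  simp only [Sym2.map_pair_eq, Sym2.eq_iff] at h
  have key : ∀ a b : VH, (liftHom s hs g) a = (liftHom s hs g) b → s.r a b := by
    intro a b hab
    exact Quotient.eq''.mp (hg hab)
  rcases h with ⟨h1, h2⟩ | ⟨h1, h2⟩
  · obtain ⟨rfl, rfl⟩ := hs.2 u v u' v' he hf (key _ _ h1) (key _ _ h2)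
    rfl
  · obtain ⟨rfl, rfl⟩ := hs.2 u v v' u' he hf.symm (key _ _ h1) (key _ _ h2)
    exact Sym2.eq_swap

end Main


lemma sigma_eq_aux {VH VG : Type*} {H : SimpleGraph VH} {G : SimpleGraph VG}
    (φ : H →g G) (hφ : EdgeInjective φ) (s : Setoid VH) (hs : EdgeInjectivePartition H s)
    (g : quotientGraph H s →g G) (hg : Function.Injective ⇑g)
    (h1 : Setoid.ker ⇑φ = s) (h2 : ∀ v, φ v = g (Quotient.mk s v)) :
    (⟨⟨Setoid.ker ⇑φ, ker_edgeInjPart φ hφ⟩, descHom φ, descHom_inj φ⟩ :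
      Σ s : {s : Setoid VH // EdgeInjectivePartition H s},
        {g : quotientGraph H s.1 →g G // Function.Injective ⇑g}) = ⟨⟨s, hs⟩, g, hg⟩ := by
  subst h1
  refine Sigma.ext rfl (heq_of_eq (Subtype.ext ?_))
  ext A
  induction A using Quotient.ind
  exact h2 _

/-- `|EdgInj(H,G)| = Σ_ρ |Emb(H/ρ,G)|`, the sum ranging over the edge-injective partitions
`ρ` of `V(H)`; more precisely, edge-injective homomorphisms from `H` to `G` are in bijection
with pairs `(ρ, g)` of an edge-injective partition `ρ` and an embedding `g : H/ρ → G`. -/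
theorem edgeInjective_eq_sum_embeddings_of_quotients
    {VH VG : Type*} [Fintype VH] [Fintype VG]
    (H : SimpleGraph VH) (G : SimpleGraph VG) :
    (Nat.card {φ : H →g G // EdgeInjective φ} =
      ∑ᶠ s : {s : Setoid VH // EdgeInjectivePartition H s},
        Nat.card {g : quotientGraph H s.1 →g G // Function.Injective ⇑g}) ∧
    Nonempty ({φ : H →g G // EdgeInjective φ} ≃
      Σ s : {s : Setoid VH // EdgeInjectivePartition H s},
        {g : quotientGraph H s.1 →g G // Function.Injective ⇑g}) := by
  have E : {φ : H →g G // EdgeInjective φ} ≃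
      Σ s : {s : Setoid VH // EdgeInjectivePartition H s},
        {g : quotientGraph H s.1 →g G // Function.Injective ⇑g} := by
    refine ⟨fun φ => ⟨⟨Setoid.ker φ.1, ker_edgeInjPart φ.1 φ.2⟩, descHom φ.1, descHom_inj φ.1⟩,
      fun p => ⟨liftHom p.1.1 p.1.2 p.2.1, liftHom_edgeInj p.1.1 p.1.2 p.2.1 p.2.2⟩,
      ?_, ?_⟩
    · rintro ⟨φ, hφ⟩
      apply Subtype.ext
      rfl
    · rintro ⟨⟨s, hs⟩, g, hg⟩
      have hsk : Setoid.ker (liftHom s hs g) = s := by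
        ext a b
        constructor
        · intro h
          exact Quotient.eq''.mp (hg h)
        · intro h
          show g _ = g _
          rw [Quotient.sound h]
      exact sigma_eq_aux (liftHom s hs g) (liftHom_edgeInj s hs g hg) s hs g hg hsk (fun v => rfl)
  refine ⟨?_, ⟨E⟩⟩
  haveI : Finite (Setoid VH) := by
    refine Finite.of_injective (fun s : Setoid VH => s.r) ?_
    intro a b h
    cases a; cases b; congr
  haveI : ∀ s : Setoid VH, Finite (Quotient s) := fun s => Quotient.finite s
  haveI hfin : ∀ s : {s : Setoid VH // EdgeInjectivePartition H s},
      Finite {g : quotientGraph H s.1 →g G // Function.Injective ⇑g} := by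
    intro s
    have : Finite (quotientGraph H s.1 →g G) :=
      Finite.of_injective (fun g => (g : Quotient s.1 → VG)) (fun a b h => RelHom.ext (congrFun h))
    infer_instance
  haveI : Fintype {s : Setoid VH // EdgeInjectivePartition H s} := Fintype.ofFinite _
  haveI : ∀ s : {s : Setoid VH // EdgeInjectivePartition H s},
      Fintype {g : quotientGraph H s.1 →g G // Function.Injective ⇑g} :=
    fun s => Fintype.ofFinite _
  rw [Nat.card_congr E]
  rw [finsum_eq_sum_of_fintype]
  rw [Nat.card_eq_fintype_card, Fintype.card_sigma]
  congr 1
  ext s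
  exact (Nat.card_eq_fintype_card).symm
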